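/- arXiv:1111.3387 — 2 statements merged into one kernel-verified Lean document; each statement's English description precedes it below -/
import Mathlib

section
/- Let H be a complex Hilbert space and T a bounded self-adjoint operator with 0 ≤ T ≤ I. For f ∈ H define f_N = (I - (I - T)^{N+1}) f. Then f_N converges in norm to f - P f, where P is the orthogonal projection onto ker T. -/
open scoped InnerProductSpace
open Filter

private lemma aux_sq_le {H : Type*} [NormedAddCommGroup H] [InnerProductSpace ℂ H]
    [CompleteSpace H]
    (A : H →L[ℂ] H) (hA : ∀ x y : H, ⟪A x, y⟫_ℂ = ⟪x, A y⟫_ℂ)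
    (hpos : ∀ x : H, 0 ≤ (⟪A x, x⟫_ℂ).re)
    (hle : ∀ x : H, (⟪A x, x⟫_ℂ).re ≤ ‖x‖ ^ 2) (g : H) :
    ‖A g‖ ^ 2 ≤ (⟪A g, g⟫_ℂ).re := by
  have h := hpos (g - A g)
  have h2 := hle (A g)
  have e1 : ⟪A (A g), g⟫_ℂ = ⟪A g, A g⟫_ℂ := hA (A g) g
  have e2 : (⟪A g, A g⟫_ℂ).re = ‖A g‖ ^ 2 := by
    have := @inner_self_eq_norm_sq ℂ H _ _ _ (A g)
    simpa using this
  rw [map_sub, inner_sub_left, inner_sub_right, inner_sub_right] at h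
  simp only [Complex.sub_re, e1, e2] at h
  nlinarith [h2]

/-- Consistency of the unfolding iteration: the iterates
`f_N = (I - (I - T)^{N+1}) f` converge in norm to `f - P f`, where `P` is the
orthogonal projection onto `ker T`. -/
theorem unfolding_iteration_tendsto
    {H : Type*} [NormedAddCommGroup H] [InnerProductSpace ℂ H] [CompleteSpace H]
    (T : H →L[ℂ] H) (hT : IsSelfAdjoint T)
    (hpos : ∀ x : H, 0 ≤ (⟪T x, x⟫_ℂ).re)
    (hle : ∀ x : H, (⟪T x, x⟫_ℂ).re ≤ ‖x‖ ^ 2)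
    (P : H →L[ℂ] H)
    (hPmem : ∀ x : H, P x ∈ LinearMap.ker (T : H →ₗ[ℂ] H))
    (hPorth : ∀ x : H, x - P x ∈ (LinearMap.ker (T : H →ₗ[ℂ] H))ᗮ)
    (f : H) :
    Tendsto (fun N : ℕ => (1 - (1 - T) ^ (N + 1)) f) atTop (nhds (f - P f)) := by
  set S : H →L[ℂ] H := 1 - T with hSdef
  have hS : IsSelfAdjoint S := (IsSelfAdjoint.one (H →L[ℂ] H)).sub hT
  have hadjT : ∀ x y : H, ⟪T x, y⟫_ℂ = ⟪x, T y⟫_ℂ := by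
    intro x y
    conv_lhs => rw [← hT.adjoint_eq]
    exact ContinuousLinearMap.adjoint_inner_left T y x
  have hadjS : ∀ x y : H, ⟪S x, y⟫_ℂ = ⟪x, S y⟫_ℂ := by
    intro x y
    conv_lhs => rw [← hS.adjoint_eq]
    exact ContinuousLinearMap.adjoint_inner_left S y x
  have hSapp : ∀ x : H, S x = x - T x := by
    intro x; simp [hSdef, ContinuousLinearMap.sub_apply]
  have hnormsq : ∀ x : H, (⟪x, x⟫_ℂ).re = ‖x‖ ^ 2 := by
    intro x
    have := @inner_self_eq_norm_sq ℂ H _ _ _ x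
    simpa using this
  have hSpos : ∀ x : H, 0 ≤ (⟪S x, x⟫_ℂ).re := by
    intro x
    rw [hSapp, inner_sub_left]
    simp only [Complex.sub_re, hnormsq]
    linarith [hle x]
  have hSle : ∀ x : H, (⟪S x, x⟫_ℂ).re ≤ ‖x‖ ^ 2 := by
    intro x
    rw [hSapp, inner_sub_left]
    simp only [Complex.sub_re, hnormsq]
    linarith [hpos x]
  have keyT : ∀ g : H, ‖T g‖ ^ 2 ≤ (⟪T g, g⟫_ℂ).re := aux_sq_le T hadjT hpos hle
  have keyS : ∀ g : H, ‖S g‖ ^ 2 ≤ (⟪S g, g⟫_ℂ).re := aux_sq_le S hadjS hSpos hSle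
  set u : ℕ → H := fun n => (S ^ n) f with hudef
  have hu_succ : ∀ n, u (n + 1) = S (u n) := by
    intro n
    show (S ^ (n + 1)) f = S ((S ^ n) f)
    rw [pow_succ', ContinuousLinearMap.mul_apply]
  have hadjSn : ∀ (n : ℕ) (x y : H), ⟪(S ^ n) x, y⟫_ℂ = ⟪x, (S ^ n) y⟫_ℂ := by
    intro n x y
    conv_lhs => rw [← (hS.pow n).adjoint_eq]
    exact ContinuousLinearMap.adjoint_inner_left (S ^ n) y x
  set a : ℕ → ℝ := fun n => (⟪u n, f⟫_ℂ).re with hadef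
  have ha : ∀ n, a n = (⟪u n, f⟫_ℂ).re := fun n => rfl
  have hip : ∀ p q : ℕ, ⟪u p, u q⟫_ℂ = ⟪u (q + p), f⟫_ℂ := by
    intro p q
    calc ⟪u p, u q⟫_ℂ = ⟪(S ^ q) (u p), f⟫_ℂ := (hadjSn q (u p) f).symm
    _ = ⟪u (q + p), f⟫_ℂ := by
        show ⟪(S ^ q) ((S ^ p) f), f⟫_ℂ = ⟪(S ^ (q + p)) f, f⟫_ℂ
        rw [pow_add, ContinuousLinearMap.mul_apply]
  have ha_anti : ∀ n, a (n + 1) ≤ a n := by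
    intro n
    rcases Nat.even_or_odd n with ⟨i, hi⟩ | ⟨i, hi⟩
    · have e1 : a n = ‖u i‖ ^ 2 := by
        rw [ha, hi, ← hip i i, hnormsq]
      have e2 : a (n + 1) = (⟪S (u i), u i⟫_ℂ).re := by
        have hn1 : n + 1 = i + (i + 1) := by omega
        rw [ha, hn1, ← hip (i + 1) i, hu_succ]
      rw [e1, e2]
      exact hSle (u i)
    · have e1 : a n = (⟪S (u i), u i⟫_ℂ).re := by
        have hn : n = i + (i + 1) := by omega
        rw [ha, hn, ← hip (i + 1) i, hu_succ]
      have e2 : a (n + 1) = ‖S (u i)‖ ^ 2 := by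
        have hn1 : n + 1 = (i + 1) + (i + 1) := by omega
        rw [ha, hn1, ← hip (i + 1) (i + 1), hu_succ, hnormsq]
      rw [e1, e2]
      exact keyS (u i)
  have ha_anti' : Antitone a := antitone_nat_of_succ_le ha_anti
  have ha_nonneg : ∀ n, 0 ≤ a n := by
    intro n
    rcases Nat.even_or_odd n with ⟨i, hi⟩ | ⟨i, hi⟩
    · have e1 : a n = ‖u i‖ ^ 2 := by rw [ha, hi, ← hip i i, hnormsq]
      rw [e1]; positivity
    · have e1 : a n = (⟪S (u i), u i⟫_ℂ).re := by
        have hn : n = i + (i + 1) := by omega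
        rw [ha, hn, ← hip (i + 1) i, hu_succ]
      rw [e1]; exact hSpos (u i)
  have hbdd : BddBelow (Set.range a) := ⟨0, by rintro x ⟨n, rfl⟩; exact ha_nonneg n⟩
  set L : ℝ := ⨅ n, a n with hLdef
  have ha_tendsto : Tendsto a atTop (nhds L) := tendsto_atTop_ciInf ha_anti' hbdd
  have hLle : ∀ n, L ≤ a n := fun n => ciInf_le hbdd n
  have hnorm : ∀ n m : ℕ, ‖u n - u m‖ ^ 2 = a (n + n) - 2 * a (m + n) + a (m + m) := by
    intro n m
    have h := @norm_sub_sq ℂ H _ _ _ (u n) (u m)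
    rw [h]
    have e1 : ‖u n‖ ^ 2 = a (n + n) := by rw [ha, ← hip n n, hnormsq]
    have e2 : ‖u m‖ ^ 2 = a (m + m) := by rw [ha, ← hip m m, hnormsq]
    have e3 : RCLike.re ⟪u n, u m⟫_ℂ = a (m + n) := by
      rw [ha, hip n m]; rfl
    rw [e1, e2, e3]
  have hcauchy : CauchySeq u := by
    rw [Metric.cauchySeq_iff]
    intro ε hε
    have hlt : L < L + ε ^ 2 / 2 := by nlinarith
    obtain ⟨N, hN⟩ := (ha_tendsto.eventually_lt_const hlt).exists_forall_of_atTop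
    refine ⟨N, fun m hm n hn => ?_⟩
    have hbound : ‖u m - u n‖ ^ 2 < ε ^ 2 := by
      rw [hnorm m n]
      have h1 : a (m + m) < L + ε ^ 2 / 2 := hN (m + m) (by omega)
      have h2 : a (n + n) < L + ε ^ 2 / 2 := hN (n + n) (by omega)
      have h3 : L ≤ a (n + m) := hLle (n + m)
      nlinarith
    rw [dist_eq_norm]
    exact lt_of_pow_lt_pow_left₀ 2 hε.le hbound
  obtain ⟨y, hy⟩ := cauchySeq_tendsto_of_complete hcauchy
  have hTu_lim : Tendsto (fun n => T (u n)) atTop (nhds (T y)) :=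
    (T.continuous.tendsto y).comp hy
  have haeven : Tendsto (fun n => a (n + n)) atTop (nhds L) :=
    ha_tendsto.comp (tendsto_atTop_mono (fun n => Nat.le_add_left n n) tendsto_id)
  have haodd : Tendsto (fun n => a (n + n + 1)) atTop (nhds L) :=
    ha_tendsto.comp (tendsto_atTop_mono (fun n => by omega : ∀ n, n ≤ n + n + 1) tendsto_id)
  have hdiff : Tendsto (fun n => a (n + n) - a (n + n + 1)) atTop (nhds 0) := by
    have := haeven.sub haodd
    simpa using this
  have hTusq : ∀ n, ‖T (u n)‖ ^ 2 ≤ a (n + n) - a (n + n + 1) := by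
    intro n
    have h1 := keyT (u n)
    have e : (⟪T (u n), u n⟫_ℂ).re = a (n + n) - a (n + n + 1) := by
      have hTu : T (u n) = u n - u (n + 1) := by
        rw [hu_succ, hSapp]; abel
      have hnn : n + (n + 1) = n + n + 1 := by omega
      rw [hTu, inner_sub_left, Complex.sub_re, hip n n, hip (n + 1) n, hnn,
        ha (n + n), ha (n + n + 1)]
    linarith [e ▸ h1]
  have hTusq_lim : Tendsto (fun n => ‖T (u n)‖ ^ 2) atTop (nhds 0) :=
    squeeze_zero (fun n => by positivity) hTusq hdiff
  have hTu0 : Tendsto (fun n => T (u n)) atTop (nhds 0) := by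
    rw [tendsto_zero_iff_norm_tendsto_zero]
    have := hTusq_lim.sqrt
    simpa [Real.sqrt_sq (norm_nonneg _)] using this
  have hTy : T y = 0 := tendsto_nhds_unique hTu_lim hTu0
  have hy_ker : y ∈ LinearMap.ker (T : H →ₗ[ℂ] H) := by
    simpa [LinearMap.mem_ker] using hTy
  have horth : f - y ∈ (LinearMap.ker (T : H →ₗ[ℂ] H))ᗮ := by
    rw [Submodule.mem_orthogonal]
    intro z hz
    have hTz : T z = 0 := by simpa [LinearMap.mem_ker] using hz
    have hSnz : ∀ n, (S ^ n) z = z := by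
      intro n
      induction n with
      | zero => simp
      | succ k ih =>
        rw [pow_succ', ContinuousLinearMap.mul_apply, ih, hSapp, hTz, sub_zero]
    have hconst : ∀ n, ⟪z, f - u n⟫_ℂ = 0 := by
      intro n
      rw [inner_sub_right]
      have huz : ⟪z, u n⟫_ℂ = ⟪z, f⟫_ℂ := by
        show ⟪z, (S ^ n) f⟫_ℂ = ⟪z, f⟫_ℂ
        rw [← hadjSn n z f, hSnz]
      rw [huz, sub_self]
    have hlim : Tendsto (fun n => ⟪z, f - u n⟫_ℂ) atTop (nhds ⟪z, f - y⟫_ℂ) :=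
      tendsto_const_nhds.inner (tendsto_const_nhds.sub hy)
    have hzero : Tendsto (fun n => ⟪z, f - u n⟫_ℂ) atTop (nhds 0) := by
      simp only [hconst]
      exact tendsto_const_nhds
    exact tendsto_nhds_unique hlim hzero
  have hyPf : y = P f := by
    have hw1 : y - P f ∈ LinearMap.ker (T : H →ₗ[ℂ] H) := sub_mem hy_ker (hPmem f)
    have hw2 : y - P f ∈ (LinearMap.ker (T : H →ₗ[ℂ] H))ᗮ := by
      have he : y - P f = (f - P f) - (f - y) := by abel
      rw [he]
      exact sub_mem (hPorth f) horth
    have h0 := (Submodule.mem_orthogonal _ _).mp hw2 _ hw1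
    rw [inner_self_eq_zero, sub_eq_zero] at h0
    exact h0
  have happ : ∀ N : ℕ, (1 - (1 - T) ^ (N + 1)) f = f - u (N + 1) := by
    intro N
    show ((1 : H →L[ℂ] H) - S ^ (N + 1)) f = f - (S ^ (N + 1)) f
    rw [ContinuousLinearMap.sub_apply, ContinuousLinearMap.one_apply]
  refine (tendsto_congr happ).mpr ?_
  have : Tendsto (fun N : ℕ => u (N + 1)) atTop (nhds (P f)) := by
    rw [← hyPf]
    exact hy.comp (tendsto_add_atTop_nat 1)
  exact tendsto_const_nhds.sub this
end

section
/- Let H be a complex Hilbert space, T bounded self-adjoint with 0 ≤ T ≤ I, and e ∈ H. Define the propagated systematic error δf_N = ∑_{k=0}^{N} (I-T)^k e. Then ‖T δf_N‖ ≤ (∑_{k=0}^{N} 1/(k+1)) ‖e‖ = (Ψ(N+2)+γ) ‖e‖. -/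
open scoped InnerProductSpace

/-- Scalar inequality: `t (1-t)^k ≤ 1/(k+1)` on `[0,1]`. -/
lemma scalar_bound (k : ℕ) {t : ℝ} (h0 : 0 ≤ t) (h1 : t ≤ 1) :
    t * (1 - t) ^ k ≤ 1 / ((k : ℝ) + 1) := by
  set s : ℝ := 1 - t with hs
  have hs0 : 0 ≤ s := by linarith
  have hs1 : s ≤ 1 := by linarith
  rw [le_div_iff₀ (by positivity)]
  have hsum : ((k : ℝ) + 1) * s ^ k ≤ ∑ j ∈ Finset.range (k + 1), s ^ j := by
    calc ((k : ℝ) + 1) * s ^ k = ∑ _j ∈ Finset.range (k + 1), s ^ k := by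
          simp [mul_comm]
      _ ≤ ∑ j ∈ Finset.range (k + 1), s ^ j :=
          Finset.sum_le_sum fun j hj => pow_le_pow_of_le_one hs0 hs1
            (Nat.le_of_lt_succ (Finset.mem_range.mp hj))
  have hgeom : (1 - s) * ∑ j ∈ Finset.range (k + 1), s ^ j = 1 - s ^ (k + 1) := by
    have h := geom_sum_mul s (k + 1)
    linear_combination -h
  calc t * (1 - t) ^ k * ((k : ℝ) + 1) = (1 - s) * (((k : ℝ) + 1) * s ^ k) := by ring
    _ ≤ (1 - s) * ∑ j ∈ Finset.range (k + 1), s ^ j :=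
        mul_le_mul_of_nonneg_left hsum (by linarith)
    _ = 1 - s ^ (k + 1) := hgeom
    _ ≤ 1 := by nlinarith [pow_nonneg hs0 (k + 1)]

/-- Systematic error bound: `‖T ∑_{k=0}^{N} (I-T)^k e‖ ≤ (∑_{k=0}^{N} 1/(k+1)) ‖e‖`
for a bounded self-adjoint `T` with `0 ≤ T ≤ I`. -/
theorem unfolding_systematic_bound
    {H : Type*} [NormedAddCommGroup H] [InnerProductSpace ℂ H] [CompleteSpace H]
    (T : H →L[ℂ] H) (hT : IsSelfAdjoint T)
    (hpos : ∀ x : H, 0 ≤ (⟪T x, x⟫_ℂ).re)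
    (hle : ∀ x : H, (⟪T x, x⟫_ℂ).re ≤ ‖x‖ ^ 2)
    (e : H) :
    ∀ N : ℕ, ‖T (∑ k ∈ Finset.range (N + 1), ((1 - T) ^ k) e)‖ ≤
      (∑ k ∈ Finset.range (N + 1), 1 / ((k : ℝ) + 1)) * ‖e‖ := by
  intro N
  -- `0 ≤ T` and `T ≤ 1` in the Loewner order
  have hT0 : (0 : H →L[ℂ] H) ≤ T :=
    (ContinuousLinearMap.nonneg_iff_isPositive T).mpr ⟨hT.isSymmetric, fun x => hpos x⟩
  have hT1 : T ≤ 1 := by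
    rw [ContinuousLinearMap.le_def]
    refine ⟨(IsSelfAdjoint.one (R := H →L[ℂ] H)).sub hT |>.isSymmetric, fun x => ?_⟩
    have h2 : RCLike.re ⟪(1 - T) x, x⟫_ℂ = ‖x‖ ^ 2 - (⟪T x, x⟫_ℂ).re := by
      rw [ContinuousLinearMap.sub_apply, inner_sub_left, map_sub,
        ContinuousLinearMap.one_apply, inner_self_eq_norm_sq]
      rfl
    simp only [ContinuousLinearMap.reApplyInnerSelf_apply]
    rw [h2]
    linarith [hle x]
  -- spectrum of `T` lies in `[0,1]`
  have hspec : ∀ x ∈ spectrum ℝ T, 0 ≤ x ∧ x ≤ 1 := fun x hx =>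
    ⟨spectrum_nonneg_of_nonneg hT0 hx, (CFC.le_one_iff T).mp hT1 x hx⟩
  -- key operator norm bound
  have key : ∀ k : ℕ, ‖T * (1 - T) ^ k‖ ≤ 1 / ((k : ℝ) + 1) := by
    intro k
    have h1 : cfc (fun x : ℝ => 1 - x) T = 1 - T := by
      rw [cfc_sub _ _ T]
      congr 1
      exacts [cfc_one ℝ T, cfc_id ℝ T]
    have hcfc : cfc (fun x : ℝ => x * (1 - x) ^ k) T = T * (1 - T) ^ k := by
      rw [cfc_mul _ _ T, cfc_pow (fun x : ℝ => 1 - x) k T, h1, cfc_id' ℝ T]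
    rw [← hcfc]
    refine norm_cfc_le (by positivity) fun x hx => ?_
    obtain ⟨h0, h1'⟩ := hspec x hx
    rw [Real.norm_eq_abs,
      abs_of_nonneg (mul_nonneg h0 (pow_nonneg (by linarith) k))]
    exact scalar_bound k h0 h1'
  -- put everything together
  calc ‖T (∑ k ∈ Finset.range (N + 1), ((1 - T) ^ k) e)‖
      = ‖∑ k ∈ Finset.range (N + 1), (T * (1 - T) ^ k) e‖ := by
        rw [map_sum]; simp [ContinuousLinearMap.mul_apply]
    _ ≤ ∑ k ∈ Finset.range (N + 1), ‖(T * (1 - T) ^ k) e‖ := norm_sum_le _ _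
    _ ≤ ∑ k ∈ Finset.range (N + 1), 1 / ((k : ℝ) + 1) * ‖e‖ := by
        refine Finset.sum_le_sum fun k _ => ?_
        exact le_trans ((T * (1 - T) ^ k).le_opNorm e)
          (mul_le_mul_of_nonneg_right (key k) (norm_nonneg e))
    _ = (∑ k ∈ Finset.range (N + 1), 1 / ((k : ℝ) + 1)) * ‖e‖ := by
        rw [Finset.sum_mul]
end
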